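/- For all natural numbers n ≥ 16 and i ≥ 7, 16n² ≤ f_i(n). -/

import Mathlib

/-- `f i` for `i ≥ 1`: `f 1 n = n + 1`, `f (i+1) n = (f i)^[⌊√n/2⌋] n`. -/
def f : ℕ → ℕ → ℕ
  | 0, n => n
  | 1, n => n + 1
  | i + 2, n => (f (i + 1))^[Nat.sqrt n / 2] n

namespace SixteenAux

/-- abbreviation for the iteration count -/
def K (m : ℕ) : ℕ := Nat.sqrt m / 2

lemma K_mono {a b : ℕ} (h : a ≤ b) : K a ≤ K b :=
  Nat.div_le_div_right (Nat.sqrt_le_sqrt h)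

lemma K_ge {c m : ℕ} (h : (2*c)*(2*c) ≤ m) : c ≤ K m := by
  have := Nat.le_sqrt.mpr h
  unfold K; omega

lemma lt_K (m : ℕ) : m < 4 * (K m + 1)^2 := by
  have h1 := Nat.lt_succ_sqrt m
  have h2 : Nat.sqrt m ≤ 2 * K m + 1 := by unfold K; omega
  nlinarith

lemma iter_le {g : ℕ → ℕ} (hg : ∀ x, x ≤ g x) : ∀ t x, x ≤ g^[t] x := by
  intro t
  induction t with
  | zero => simp
  | succ t ih =>
    intro x
    rw [Function.iterate_succ_apply]
    exact (hg x).trans (ih (g x))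

lemma f_le : ∀ i, 1 ≤ i → ∀ m, m ≤ f i m := by
  intro i hi
  induction i, hi using Nat.le_induction with
  | base => intro m; simp [f]
  | succ i hi ih =>
    obtain ⟨j, rfl⟩ : ∃ j, i = j + 1 := ⟨i - 1, by omega⟩
    intro m
    show m ≤ (f (j + 1))^[Nat.sqrt m / 2] m
    exact iter_le ih _ m

lemma f_succ_le (i : ℕ) (hi : 1 ≤ i) (m : ℕ) (hm : 4 ≤ m) : f i m ≤ f (i+1) m := by
  obtain ⟨j, rfl⟩ : ∃ j, i = j + 1 := ⟨i - 1, by omega⟩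
  show f (j+1) m ≤ (f (j + 1))^[Nat.sqrt m / 2] m
  have hk : 1 ≤ Nat.sqrt m / 2 := K_ge (c := 1) (m := m) (by omega)
  obtain ⟨t, ht⟩ : ∃ t, Nat.sqrt m / 2 = t + 1 := ⟨Nat.sqrt m / 2 - 1, by omega⟩
  rw [ht, Function.iterate_succ_apply]
  exact iter_le (f_le (j+1) (by omega)) t _

lemma f1_iter : ∀ t m, (f 1)^[t] m = m + t := by
  intro t
  induction t with
  | zero => simp
  | succ t ih =>
    intro m
    rw [Function.iterate_succ_apply', ih]
    rfl

lemma f_add : ∀ i m, m + K m ^ (i+1) ≤ f (i+2) m := by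
  intro i
  induction i with
  | zero =>
    intro m
    show m + K m ^ 1 ≤ (f 1)^[Nat.sqrt m / 2] m
    rw [f1_iter, pow_one]
    unfold K
    exact le_rfl
  | succ i ih =>
    intro m
    have inner : ∀ t, m + t * K m ^ (i+1) ≤ (f (i+2))^[t] m := by
      intro t
      induction t with
      | zero => simp
      | succ t iht =>
        rw [Function.iterate_succ_apply']
        set y := (f (i+2))^[t] m with hy
        have hym : m ≤ y := iter_le (f_le (i+2) (by omega)) t m
        have h1 := ih y
        have h2 : K m ^ (i+1) ≤ K y ^ (i+1) := Nat.pow_le_pow_left (K_mono hym) _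
        calc m + (t+1) * K m ^ (i+1) = (m + t * K m ^ (i+1)) + K m ^ (i+1) := by ring
          _ ≤ y + K y ^ (i+1) := Nat.add_le_add iht h2
          _ ≤ f (i+2) y := h1
    have h := inner (K m)
    show m + K m ^ (i+2) ≤ (f (i+2))^[Nat.sqrt m / 2] m
    calc m + K m ^ (i+2) = m + K m * K m ^ (i+1) := by ring
      _ ≤ (f (i+2))^[K m] m := h

lemma iter_mul {g : ℕ → ℕ} (c : ℕ) (hg1 : ∀ x, x ≤ g x)
    (hg : ∀ x, 144 ≤ x → c * x ≤ g x) :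
    ∀ t x, 144 ≤ x → c^t * x ≤ g^[t] x := by
  intro t
  induction t with
  | zero => intro x _; simp
  | succ t ih =>
    intro x hx
    rw [Function.iterate_succ_apply]
    have hgx : 144 ≤ g x := hx.trans (hg1 x)
    calc c^(t+1) * x = c^t * (c * x) := by ring
      _ ≤ c^t * g x := Nat.mul_le_mul_left _ (hg x hx)
      _ ≤ g^[t] (g x) := ih (g x) hgx

lemma f4_double (m : ℕ) (hm : 144 ≤ m) : 2 * m ≤ f 4 m := by
  have hk : 6 ≤ K m := K_ge (c := 6) (by omega)
  have h1 := f_add 2 m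
  have h2 := lt_K m
  have h3 : m ≤ K m ^ 3 := by nlinarith
  calc 2 * m = m + m := by ring
    _ ≤ m + K m ^ 3 := by omega
    _ ≤ f 4 m := h1

lemma f5_mul (m : ℕ) (hm : 144 ≤ m) : 64 * m ≤ f 5 m := by
  have hk : 6 ≤ K m := K_ge (c := 6) (by omega)
  have h := iter_mul 2 (f_le 4 (by omega)) f4_double (K m) m hm
  have h64 : (64 : ℕ) ≤ 2 ^ K m := by
    calc (64 : ℕ) = 2 ^ 6 := by norm_num
      _ ≤ 2 ^ K m := Nat.pow_le_pow_right (by norm_num) hk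
  calc 64 * m ≤ 2 ^ K m * m := Nat.mul_le_mul_right m h64
    _ ≤ (f 4)^[K m] m := h
    _ = f 5 m := rfl

lemma f6_sq (m : ℕ) (hm : 144 ≤ m) : 16 * m^2 ≤ f 6 m := by
  have hk : 6 ≤ K m := K_ge (c := 6) (by omega)
  have h := iter_mul 64 (f_le 5 (by omega)) f5_mul (K m) m hm
  set k := K m with hkdef
  have hm2 : m < 4 * (k+1)^2 := lt_K m
  have h2p : k + 1 ≤ 2 ^ k := Nat.lt_two_pow_self (n := k)
  have key : 16 * m ≤ 64 ^ k := by
    calc 16 * m ≤ 16 * (4 * (k+1)^2) := by nlinarith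
      _ = 64 * (k+1)^2 := by ring
      _ ≤ 64 * (2^k)^2 := by
          have := Nat.pow_le_pow_left h2p 2
          omega
      _ = 64 * 4 ^ k := by
          congr 1
          rw [← pow_mul, mul_comm k 2, pow_mul]
          norm_num
      _ ≤ 16 ^ k * 4 ^ k := by
          have h16 : (64 : ℕ) ≤ 16 ^ k := by
            calc (64 : ℕ) ≤ 16 ^ 2 := by norm_num
              _ ≤ 16 ^ k := Nat.pow_le_pow_right (by norm_num) (by omega)
          exact Nat.mul_le_mul_right _ h16
      _ = 64 ^ k := by rw [← mul_pow]; norm_num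
  calc 16 * m^2 = (16 * m) * m := by ring
    _ ≤ 64 ^ k * m := Nat.mul_le_mul_right m key
    _ ≤ (f 5)^[k] m := h
    _ = f 6 m := rfl

lemma f7_main (n : ℕ) (hn : 16 ≤ n) : 16 * n ^ 2 ≤ f 7 n := by
  have hk2 : 2 ≤ K n := K_ge (c := 2) (by omega)
  have step2 : f 6 (f 6 n) ≤ f 7 n := by
    show f 6 (f 6 n) ≤ (f 6)^[Nat.sqrt n / 2] n
    obtain ⟨t, ht⟩ : ∃ t, Nat.sqrt n / 2 = t + 2 := ⟨Nat.sqrt n / 2 - 2, by unfold K at hk2; omega⟩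
    rw [ht, Function.iterate_add_apply]
    have h2 : (f 6)^[2] n = f 6 (f 6 n) := rfl
    rw [h2]
    exact iter_le (f_le 6 (by omega)) t _
  set m1 := f 6 n with hm1def
  have hm1n : n ≤ m1 := f_le 6 (by omega) n
  by_cases h36 : 36 ≤ n
  · have hk3 : 3 ≤ K n := K_ge (c := 3) (by omega)
    have h1 : n + K n ^ 5 ≤ f 6 n := f_add 4 n
    have h243 : 243 ≤ K n ^ 5 := by
      calc (243 : ℕ) = 3 ^ 5 := by norm_num
        _ ≤ K n ^ 5 := Nat.pow_le_pow_left hk3 5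
    have hm1 : 144 ≤ m1 := by omega
    have h2 := f6_sq m1 hm1
    have h3 : 16 * n ^ 2 ≤ 16 * m1 ^ 2 :=
      Nat.mul_le_mul_left 16 (Nat.pow_le_pow_left hm1n 2)
    exact h3.trans (h2.trans step2)
  · -- 16 ≤ n ≤ 35
    push_neg at h36
    have h1 : n + K n ^ 5 ≤ f 6 n := f_add 4 n
    have h32 : 32 ≤ K n ^ 5 := by
      calc (32 : ℕ) = 2 ^ 5 := by norm_num
        _ ≤ K n ^ 5 := Nat.pow_le_pow_left hk2 5
    have hm1' : 48 ≤ m1 := by omega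
    have hkm1 : 3 ≤ K m1 := K_ge (c := 3) (by omega)
    have hiter : (f 5)^[3] m1 ≤ f 6 m1 := by
      show _ ≤ (f 5)^[Nat.sqrt m1 / 2] m1
      obtain ⟨t, ht⟩ : ∃ t, Nat.sqrt m1 / 2 = t + 3 := ⟨Nat.sqrt m1 / 2 - 3, by unfold K at hkm1; omega⟩
      rw [ht, Function.iterate_add_apply]
      exact iter_le (f_le 5 (by omega)) t _
    set m2 := f 5 m1 with hm2def
    have hm2 : 129 ≤ m2 := by
      have ha : m1 + K m1 ^ 4 ≤ f 5 m1 := f_add 3 m1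
      have hb : 81 ≤ K m1 ^ 4 := by
        calc (81 : ℕ) = 3 ^ 4 := by norm_num
          _ ≤ K m1 ^ 4 := Nat.pow_le_pow_left hkm1 4
      omega
    have hkm2 : 5 ≤ K m2 := K_ge (c := 5) (by omega)
    set m3 := f 5 m2 with hm3def
    have hm3 : 754 ≤ m3 := by
      have ha : m2 + K m2 ^ 4 ≤ f 5 m2 := f_add 3 m2
      have hb : 625 ≤ K m2 ^ 4 := by
        calc (625 : ℕ) = 5 ^ 4 := by norm_num
          _ ≤ K m2 ^ 4 := Nat.pow_le_pow_left hkm2 4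
      omega
    have h4 : 64 * m3 ≤ f 5 m3 := f5_mul m3 (by omega)
    have hfin : 48256 ≤ f 5 m3 := by
      have : 64 * 754 ≤ 64 * m3 := Nat.mul_le_mul_left 64 hm3
      omega
    have hrw : (f 5)^[3] m1 = f 5 m3 := by
      show f 5 (f 5 (f 5 m1)) = f 5 m3
      rw [← hm2def, ← hm3def]
    have hn2 : 16 * n ^ 2 ≤ 19600 := by nlinarith
    have : 16 * n ^ 2 ≤ (f 5)^[3] m1 := by rw [hrw]; omega
    exact this.trans (hiter.trans (by
      have h6 : f 6 m1 ≤ f 6 (f 6 n) := le_of_eq (by rw [hm1def])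
      exact h6.trans step2))

end SixteenAux

theorem sixteen_sq_le_f (n i : ℕ) (hn : 16 ≤ n) (hi : 7 ≤ i) :
    16 * n ^ 2 ≤ f i n := by
  induction i, hi using Nat.le_induction with
  | base => exact SixteenAux.f7_main n hn
  | succ i hi ih =>
    exact ih.trans (SixteenAux.f_succ_le i (by omega) n (by omega))
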